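/- arXiv:1604.05037 — 2 statements merged into one kernel-verified Lean document; each statement's English description precedes it below -/
import Mathlib

section
/- Let A ∈ ℂ^{M×K}, a ∈ ℂ^M with A₊ = [A, a] of full column rank, and let D ∈ ℂ^{M×K}, d ∈ ℂ^M with D₊ = [D, d]. Define T₊ = D₊ᴴ(I − A₊A₊†)D₊ and T = Dᴴ(I − AA†)D. Then the K-th leading principal submatrix of T₊ satisfies (T₊)_K = T − DᴴUD ⪯ T, where U = (1/(aᴴ(I − AA†)a)) ((I − AA†)a)((I − AA†)a)ᴴ. -/
open Matrix ComplexOrder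

/-- Moore–Penrose pseudo-inverse of a full-column-rank matrix. -/
noncomputable def pinv {M K : ℕ} (A : Matrix (Fin M) (Fin K) ℂ) : Matrix (Fin K) (Fin M) ℂ :=
  (Aᴴ * A)⁻¹ * Aᴴ

private lemma aux_vecMulVec_mul {m n p : Type*} [Fintype n] (x : m → ℂ) (y : n → ℂ)
    (B : Matrix n p ℂ) : Matrix.vecMulVec x y * B = Matrix.vecMulVec x (y ᵥ* B) := by
  ext i j
  simp [Matrix.vecMulVec_apply, Matrix.mul_apply, Matrix.vecMul, dotProduct,
    Finset.mul_sum, mul_assoc]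

private lemma aux_mul_vecMulVec {m n p : Type*} [Fintype n] (B : Matrix m n ℂ) (x : n → ℂ)
    (y : p → ℂ) : B * Matrix.vecMulVec x y = Matrix.vecMulVec (B *ᵥ x) y := by
  ext i j
  simp [Matrix.vecMulVec_apply, Matrix.mul_apply, Matrix.mulVec, dotProduct,
    Finset.sum_mul, mul_assoc]

private lemma aux_vecMulVec_mulVec {m n : Type*} [Fintype n] (x : m → ℂ) (y : n → ℂ)
    (z : n → ℂ) : Matrix.vecMulVec x y *ᵥ z = (y ⬝ᵥ z) • x := by
  ext i
  simp only [Matrix.mulVec, dotProduct, Matrix.vecMulVec_apply, Pi.smul_apply,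
    smul_eq_mul, Finset.sum_mul]
  exact Finset.sum_congr rfl fun k _ => by ring

private lemma aux_star_of_nonneg {z : ℂ} (h : 0 ≤ z) : star z = z := by
  rw [Complex.star_def, Complex.conj_eq_iff_im]
  simpa using (Complex.le_def.1 h).2.symm

private lemma aux_inv_nonneg {z : ℂ} (h : 0 ≤ z) : 0 ≤ z⁻¹ := by
  rw [Complex.le_def] at h ⊢
  simp only [Complex.zero_re, Complex.zero_im] at h ⊢
  obtain ⟨h1, h2⟩ := h
  refine ⟨?_, ?_⟩
  · rw [Complex.inv_re]
    exact div_nonneg h1 (Complex.normSq_nonneg z)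
  · rw [Complex.inv_im, ← h2]
    simp

/-- With `A₊ = [A, a]` of full column rank and `D₊ = [D, d]`, setting
`T₊ = D₊ᴴ(I − A₊A₊†)D₊` and `T = Dᴴ(I − AA†)D`, the `K`-th leading principal submatrix of
`T₊` equals `T − DᴴUD` and satisfies `(T₊)_K ⪯ T`, where
`U = ((I − AA†)a)((I − AA†)a)ᴴ / (aᴴ(I − AA†)a)`. -/
theorem stmt3 (M K : ℕ) (A D : Matrix (Fin M) (Fin K) ℂ) (a d : Fin M → ℂ)
    (Ap Dp : Matrix (Fin M) (Fin (K + 1)) ℂ)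
    (hAp : Ap = Matrix.of fun i j => Fin.lastCases (a i) (fun k => A i k) j)
    (hDp : Dp = Matrix.of fun i j => Fin.lastCases (d i) (fun k => D i k) j)
    (hA : IsUnit (Aᴴ * A).det) (hApr : IsUnit (Apᴴ * Ap).det)
    (hden : star a ⬝ᵥ ((1 - A * pinv A) *ᵥ a) ≠ 0)
    (U : Matrix (Fin M) (Fin M) ℂ)
    (hU : U = (star a ⬝ᵥ ((1 - A * pinv A) *ᵥ a))⁻¹ •
        Matrix.vecMulVec ((1 - A * pinv A) *ᵥ a) (star ((1 - A * pinv A) *ᵥ a)))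
    (Tp : Matrix (Fin (K + 1)) (Fin (K + 1)) ℂ) (T : Matrix (Fin K) (Fin K) ℂ)
    (hTp : Tp = Dpᴴ * (1 - Ap * pinv Ap) * Dp)
    (hT : T = Dᴴ * (1 - A * pinv A) * D) :
    Tp.submatrix Fin.castSucc Fin.castSucc = T - Dᴴ * U * D ∧
      (T - Tp.submatrix Fin.castSucc Fin.castSucc).PosSemidef := by
  obtain ⟨P, hP⟩ : ∃ P, P = 1 - A * pinv A := ⟨_, rfl⟩
  obtain ⟨v, hv⟩ : ∃ v, v = P *ᵥ a := ⟨_, rfl⟩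
  obtain ⟨c, hcd⟩ : ∃ c, c = star a ⬝ᵥ (P *ᵥ a) := ⟨_, rfl⟩
  have hcne : c ≠ 0 := by rw [hcd, hP]; exact hden
  -- basic facts about `pinv A`
  have hπA : pinv A * A = 1 := by
    rw [pinv, Matrix.mul_assoc]; exact Matrix.nonsing_inv_mul _ hA
  have hPA : P * A = 0 := by
    rw [hP, Matrix.sub_mul, Matrix.one_mul, Matrix.mul_assoc, hπA, Matrix.mul_one, sub_self]
  have hAπH : (A * pinv A)ᴴ = A * pinv A := by
    rw [pinv, conjTranspose_mul, conjTranspose_mul, Matrix.conjTranspose_nonsing_inv,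
      conjTranspose_mul, conjTranspose_conjTranspose, Matrix.mul_assoc]
  have hPH : Pᴴ = P := by
    rw [hP, conjTranspose_sub, conjTranspose_one, hAπH]
  have hπP : pinv A * P = 0 := by
    rw [hP, Matrix.mul_sub, Matrix.mul_one, ← Matrix.mul_assoc, hπA, Matrix.one_mul, sub_self]
  have hPP : P * P = P := by
    have h0 : pinv A * (1 - A * pinv A) = 0 := by rw [← hP]; exact hπP
    rw [hP, Matrix.sub_mul, Matrix.one_mul, Matrix.mul_assoc, h0, Matrix.mul_zero, sub_zero]
  have hAHP : Aᴴ * P = 0 := by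
    have : Aᴴ * P = (Pᴴ * A)ᴴ := by
      rw [conjTranspose_mul, conjTranspose_conjTranspose]
    rw [this, hPH, hPA, conjTranspose_zero]
  have hAHv : Aᴴ *ᵥ v = 0 := by
    rw [hv, Matrix.mulVec_mulVec, hAHP, Matrix.zero_mulVec]
  have hsvA : star v ᵥ* A = 0 := by
    have h := Matrix.star_mulVec (M := Aᴴ) (v := v)
    rw [conjTranspose_conjTranspose] at h
    rw [← h, hAHv]
    simp
  have hsaP : star a ᵥ* P = star v := by
    have h := Matrix.star_mulVec (M := Pᴴ) (v := a)
    rw [conjTranspose_conjTranspose, hPH] at h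
    rw [← h, hv]
  have hc : c = star v ⬝ᵥ v := by
    conv_lhs => rw [hcd, ← hPP, ← Matrix.mulVec_mulVec, ← hv,
      Matrix.dotProduct_mulVec, hsaP]
  have hc0 : 0 ≤ c := hc ▸ dotProduct_star_self_nonneg v
  have hstarc : star c = c := aux_star_of_nonneg hc0
  have hUv : U = c⁻¹ • Matrix.vecMulVec v (star v) := by
    rw [hU, ← hP, ← hcd, ← hv]
  have hUH : Uᴴ = U := by
    rw [hUv, Matrix.conjTranspose_smul]
    congr 1
    · rw [star_inv₀, hstarc]
    · ext i j
      simp [Matrix.vecMulVec_apply, Matrix.conjTranspose_apply, mul_comm]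
  have hUA : U * A = 0 := by
    rw [hUv, Matrix.smul_mul, aux_vecMulVec_mul, hsvA]
    ext i j
    simp [Matrix.vecMulVec_apply]
  have hsva : star v ⬝ᵥ a = c := by
    rw [Matrix.star_dotProduct, hv, ← hcd, hstarc]
  have hUa : U *ᵥ a = v := by
    rw [hUv, Matrix.smul_mulVec, aux_vecMulVec_mulVec, hsva, smul_smul,
      inv_mul_cancel₀ hcne, one_smul]
  have hva : v = a - (A * pinv A) *ᵥ a := by
    rw [hv, hP, Matrix.sub_mulVec, Matrix.one_mulVec]
  -- the matrix Q
  obtain ⟨Q, hQ⟩ : ∃ Q, Q = A * pinv A + U := ⟨_, rfl⟩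
  have hQA : Q * A = A := by
    rw [hQ, Matrix.add_mul, hUA, add_zero, Matrix.mul_assoc, hπA, Matrix.mul_one]
  have hQa : Q *ᵥ a = a := by
    rw [hQ, Matrix.add_mulVec, hUa, hva, add_sub_cancel]
  have hQH : Qᴴ = Q := by
    rw [hQ, conjTranspose_add, hAπH, hUH]
  -- the matrix R
  obtain ⟨R, hR⟩ : ∃ R, R = Ap * pinv Ap := ⟨_, rfl⟩
  have hπpAp : pinv Ap * Ap = 1 := by
    rw [pinv, Matrix.mul_assoc]; exact Matrix.nonsing_inv_mul _ hApr
  have hRAp : R * Ap = Ap := by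
    rw [hR, Matrix.mul_assoc, hπpAp, Matrix.mul_one]
  have hRH : Rᴴ = R := by
    rw [hR, pinv, conjTranspose_mul, conjTranspose_mul, Matrix.conjTranspose_nonsing_inv,
      conjTranspose_mul, conjTranspose_conjTranspose, Matrix.mul_assoc]
  have hApc : ∀ i j, Ap i (Fin.castSucc j) = A i j := by
    intro i j; rw [hAp]; simp
  have hApl : ∀ i, Ap i (Fin.last K) = a i := by
    intro i; rw [hAp]; simp
  have hRA : R * A = A := by
    ext i j
    have h1 : (R * Ap) i (Fin.castSucc j) = Ap i (Fin.castSucc j) := by rw [hRAp]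
    simp only [Matrix.mul_apply, hApc] at h1 ⊢
    rw [h1]
  have hRa : R *ᵥ a = a := by
    ext i
    have h1 : (R * Ap) i (Fin.last K) = Ap i (Fin.last K) := by rw [hRAp]
    simp only [Matrix.mul_apply, hApl] at h1
    simpa [Matrix.mulVec, dotProduct] using h1
  have hQAp : Q * Ap = Ap := by
    ext i j
    induction j using Fin.lastCases with
    | last =>
      have h1 : (Q * Ap) i (Fin.last K) = (Q *ᵥ a) i := by
        simp [Matrix.mul_apply, hApl, Matrix.mulVec, dotProduct]
      rw [h1, hQa, hApl]
    | cast j =>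
      have h1 : (Q * Ap) i (Fin.castSucc j) = (Q * A) i j := by
        simp [Matrix.mul_apply, hApc]
      rw [h1, hQA, hApc]
  have hQR : Q * R = R := by
    rw [hR, ← Matrix.mul_assoc, hQAp]
  have hRv : R *ᵥ v = v := by
    rw [hva, Matrix.mulVec_sub, hRa, Matrix.mulVec_mulVec, ← Matrix.mul_assoc, hRA]
  have hRU : R * U = U := by
    rw [hUv, Matrix.mul_smul, aux_mul_vecMulVec, hRv]
  have hRQ : R * Q = Q := by
    rw [hQ, Matrix.mul_add, hRU, ← Matrix.mul_assoc, hRA]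
  have hReQ : R = Q := by
    calc R = Rᴴ := hRH.symm
      _ = (Q * R)ᴴ := by rw [hQR]
      _ = Rᴴ * Qᴴ := conjTranspose_mul _ _
      _ = R * Q := by rw [hRH, hQH]
      _ = Q := hRQ
  have h1R : (1 : Matrix (Fin M) (Fin M) ℂ) - Ap * pinv Ap = P - U := by
    rw [← hR, hReQ, hQ, ← sub_sub, ← hP]
  -- submatrix computation
  have hDpc : ∀ i j, Dp i (Fin.castSucc j) = D i j := by
    intro i j; rw [hDp]; simp
  have hsub : ∀ X : Matrix (Fin M) (Fin M) ℂ,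
      (Dpᴴ * X * Dp).submatrix Fin.castSucc Fin.castSucc = Dᴴ * X * D := by
    intro X
    ext i j
    simp [Matrix.mul_apply, Matrix.conjTranspose_apply, hDpc]
  have hmain : Tp.submatrix Fin.castSucc Fin.castSucc = T - Dᴴ * U * D := by
    rw [hTp, h1R, hsub, Matrix.mul_sub, Matrix.sub_mul, hT, ← hP]
  refine ⟨hmain, ?_⟩
  have hdiff : T - Tp.submatrix Fin.castSucc Fin.castSucc = Dᴴ * U * D := by
    rw [hmain, sub_sub_cancel]
  rw [hdiff]
  have hUpsd : U.PosSemidef := by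
    refine Matrix.PosSemidef.of_dotProduct_mulVec_nonneg ?_ ?_
    · exact hUH
    · intro x
      rw [hUv, Matrix.smul_mulVec, aux_vecMulVec_mulVec,
        dotProduct_smul, dotProduct_smul, smul_eq_mul, smul_eq_mul]
      have hx : star x ⬝ᵥ v = star (star v ⬝ᵥ x) := Matrix.star_dotProduct _ _
      rw [hx]
      exact mul_nonneg (aux_inv_nonneg hc0) (mul_star_self_nonneg _)
  exact hUpsd.conjTranspose_mul_mul_same D
end

section
/- Let T₊ ⪰ 0 and R₊ ⪰ 0 be Hermitian (K+1)×(K+1) matrices, and suppose Re(T₊ ⊙ R₊) is invertible with its K-th leading principal submatrix Re((T₊)_K ⊙ (R₊)_K) also invertible. If (T₊)_K ⪯ T for some Hermitian K×K matrix T with Re(T ⊙ (R₊)_K) ≻ 0, then ((Re(T₊ ⊙ R₊))⁻¹)_K ⪰ (Re(T ⊙ (R₊)_K))⁻¹. -/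
open Matrix ComplexOrder

-- Schur product theorem over ℂ
lemma schurPSD {n : ℕ} {A B : Matrix (Fin n) (Fin n) ℂ}
    (hA : A.PosSemidef) (hB : B.PosSemidef) :
    (Matrix.hadamard A B).PosSemidef := by
  obtain ⟨C, hC⟩ := (by
    open scoped MatrixOrder in
    exact CStarAlgebra.nonneg_iff_eq_star_mul_self.mp hB.nonneg :
      ∃ C : Matrix (Fin n) (Fin n) ℂ, B = star C * C)
  rw [star_eq_conjTranspose] at hC
  subst hC
  refine PosSemidef.of_dotProduct_mulVec_nonneg ?_ ?_
  · have hAh := hA.isHermitian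
    have : (Cᴴ * C).IsHermitian := (Matrix.posSemidef_conjTranspose_mul_self C).isHermitian
    ext i j
    simp [Matrix.conjTranspose_apply, Matrix.hadamard_apply, _root_.map_mul,
      hAh.apply, this.apply]
  · intro x
    have key : star x ⬝ᵥ (Matrix.hadamard A (Cᴴ * C)) *ᵥ x
        = ∑ k, star (fun i => C k i * x i) ⬝ᵥ A *ᵥ (fun i => C k i * x i) := by
      simp only [dotProduct, Matrix.mulVec, Matrix.hadamard_apply,
        Matrix.mul_apply, Matrix.conjTranspose_apply, Pi.star_apply,
        Finset.mul_sum, Finset.sum_mul]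
      conv_rhs => rw [Finset.sum_comm]
      refine Finset.sum_congr rfl fun i _ => ?_
      conv_rhs => rw [Finset.sum_comm]
      refine Finset.sum_congr rfl fun j _ => Finset.sum_congr rfl fun k _ => ?_
      simp only [star_mul', RCLike.star_def]
      ring
    rw [key]
    exact Finset.sum_nonneg fun k _ => hA.dotProduct_mulVec_nonneg _

-- real part of a complex PSD matrix is PSD
lemma rePSD {n : ℕ} {S : Matrix (Fin n) (Fin n) ℂ} (hS : S.PosSemidef) :
    (S.map Complex.re).PosSemidef := by
  refine PosSemidef.of_dotProduct_mulVec_nonneg ?_ ?_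
  · ext i j
    simp only [Matrix.conjTranspose_apply, Matrix.map_apply, star_trivial]
    rw [← hS.isHermitian.apply i j]
    simp [Matrix.conjTranspose_apply, Complex.conj_re]
  · intro x
    have h := hS.re_dotProduct_nonneg (fun i => (x i : ℂ))
    have key : star x ⬝ᵥ (S.map Complex.re) *ᵥ x
        = RCLike.re (star (fun i => (x i : ℂ)) ⬝ᵥ S *ᵥ (fun i => (x i : ℂ))) := by
      simp only [dotProduct, Matrix.mulVec, Matrix.map_apply, Pi.star_apply,
        star_trivial, RCLike.star_def, Complex.conj_ofReal, RCLike.re_to_complex,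
        Complex.re_sum, Finset.mul_sum]
      refine Finset.sum_congr rfl fun i _ => Finset.sum_congr rfl fun j _ => ?_
      rw [Complex.re_ofReal_mul, Complex.re_mul_ofReal]
    rw [key]
    exact h

lemma posDefOfUnitDet {n : ℕ} {A : Matrix (Fin n) (Fin n) ℝ}
    (hA : A.PosSemidef) (h : IsUnit A.det) : A.PosDef := by
  refine PosDef.of_dotProduct_mulVec_pos hA.isHermitian fun x hx => ?_
  rcases lt_or_eq_of_le (hA.dotProduct_mulVec_nonneg x) with h1 | h1
  · exact h1
  · exfalso
    have h2 : A *ᵥ x = 0 := (hA.dotProduct_mulVec_zero_iff x).mp h1.symm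
    apply hx
    have : A⁻¹ *ᵥ (A *ᵥ x) = x := by
      rw [Matrix.mulVec_mulVec, Matrix.nonsing_inv_mul A h, Matrix.one_mulVec]
    rw [← this, h2, Matrix.mulVec_zero]

lemma snocDot {K : ℕ} (u v : Fin K → ℝ) :
    (Fin.snoc u 0 : Fin (K+1) → ℝ) ⬝ᵥ (Fin.snoc v 0 : Fin (K+1) → ℝ) = u ⬝ᵥ v := by
  simp [dotProduct, Fin.sum_univ_castSucc]

lemma snocQuad {K : ℕ} (N : Matrix (Fin (K+1)) (Fin (K+1)) ℝ) (u v : Fin K → ℝ) :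
    (Fin.snoc u 0 : Fin (K+1) → ℝ) ⬝ᵥ N *ᵥ (Fin.snoc v 0 : Fin (K+1) → ℝ)
      = u ⬝ᵥ (N.submatrix Fin.castSucc Fin.castSucc) *ᵥ v := by
  simp [dotProduct, Matrix.mulVec, Fin.sum_univ_castSucc, Finset.mul_sum]

-- main key lemma
lemma keyIneq {K : ℕ} {A : Matrix (Fin (K+1)) (Fin (K+1)) ℝ} (hA : A.PosDef)
    {M : Matrix (Fin K) (Fin K) ℝ} (hM : M.PosDef)
    (hle : (M - A.submatrix Fin.castSucc Fin.castSucc).PosSemidef) :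
    ((A⁻¹).submatrix Fin.castSucc Fin.castSucc - M⁻¹).PosSemidef := by
  have hAdet : IsUnit A.det := isUnit_iff_ne_zero.mpr hA.det_pos.ne'
  have hMdet : IsUnit M.det := isUnit_iff_ne_zero.mpr hM.det_pos.ne'
  have hAsymm : Aᵀ = A := by
    have := hA.isHermitian
    rwa [Matrix.IsHermitian, Matrix.conjTranspose_eq_transpose_of_trivial] at this
  refine PosSemidef.of_dotProduct_mulVec_nonneg ?_ ?_
  · exact (hA.inv.isHermitian.submatrix _).sub hM.inv.isHermitian
  · intro x
    rw [star_trivial]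
    set xt : Fin (K+1) → ℝ := Fin.snoc x 0 with hxt
    set a : Fin (K+1) → ℝ := A⁻¹ *ᵥ xt with ha
    set b : Fin K → ℝ := M⁻¹ *ᵥ x with hb
    set bt : Fin (K+1) → ℝ := Fin.snoc b 0 with hbt
    have hAa : A *ᵥ a = xt := by
      rw [ha, Matrix.mulVec_mulVec, Matrix.mul_nonsing_inv A hAdet, Matrix.one_mulVec]
    have hMb : M *ᵥ b = x := by
      rw [hb, Matrix.mulVec_mulVec, Matrix.mul_nonsing_inv M hMdet, Matrix.one_mulVec]
    have hvm : ∀ v : Fin (K+1) → ℝ, a ⬝ᵥ A *ᵥ v = xt ⬝ᵥ v := by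
      intro v
      rw [Matrix.dotProduct_mulVec, ← Matrix.mulVec_transpose, hAsymm, hAa]
    have e1 : x ⬝ᵥ ((A⁻¹).submatrix Fin.castSucc Fin.castSucc) *ᵥ x = xt ⬝ᵥ a := by
      rw [← snocQuad, ← hxt, ← ha]
    have e2 : x ⬝ᵥ M⁻¹ *ᵥ x = x ⬝ᵥ b := rfl
    have hW : (0:ℝ) ≤ (a - bt) ⬝ᵥ A *ᵥ (a - bt) := by
      have := hA.posSemidef.dotProduct_mulVec_nonneg (a - bt)
      rwa [star_trivial] at this
    have hB : (0:ℝ) ≤ b ⬝ᵥ (M - A.submatrix Fin.castSucc Fin.castSucc) *ᵥ b := by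
      have := hle.dotProduct_mulVec_nonneg b
      rwa [star_trivial] at this
    have expand1 : (a - bt) ⬝ᵥ A *ᵥ (a - bt)
        = xt ⬝ᵥ a - 2 * (x ⬝ᵥ b) + b ⬝ᵥ (A.submatrix Fin.castSucc Fin.castSucc) *ᵥ b := by
      rw [Matrix.mulVec_sub, sub_dotProduct, dotProduct_sub,
        dotProduct_sub, hvm, hvm]
      have c1 : a ⬝ᵥ A *ᵥ a = xt ⬝ᵥ a := hvm a
      have c2 : xt ⬝ᵥ bt = x ⬝ᵥ b := snocDot x b
      have c3 : bt ⬝ᵥ A *ᵥ a = bt ⬝ᵥ xt := by rw [hAa]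
      have c4 : bt ⬝ᵥ xt = b ⬝ᵥ x := snocDot b x
      have c5 : bt ⬝ᵥ A *ᵥ bt = b ⬝ᵥ (A.submatrix Fin.castSucc Fin.castSucc) *ᵥ b :=
        snocQuad A b b
      rw [c2, c3, c4, c5, dotProduct_comm b x]
      ring
    have expand2 : b ⬝ᵥ (M - A.submatrix Fin.castSucc Fin.castSucc) *ᵥ b
        = x ⬝ᵥ b - b ⬝ᵥ (A.submatrix Fin.castSucc Fin.castSucc) *ᵥ b := by
      rw [Matrix.sub_mulVec, dotProduct_sub, hMb, dotProduct_comm b x]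
    rw [Matrix.sub_mulVec, dotProduct_sub, e1, e2]
    rw [expand1] at hW
    rw [expand2] at hB
    linarith

/-- Let `T₊ ⪰ 0` and `R₊ ⪰ 0` be Hermitian `(K+1)×(K+1)` matrices with
`Re(T₊ ⊙ R₊)` invertible and `Re((T₊)_K ⊙ (R₊)_K)` invertible. If `(T₊)_K ⪯ T` for a
Hermitian `T` with `Re(T ⊙ (R₊)_K) ≻ 0`, then
`((Re(T₊ ⊙ R₊))⁻¹)_K ⪰ (Re(T ⊙ (R₊)_K))⁻¹`. -/
theorem stmt5 (K : ℕ) (Tp Rp : Matrix (Fin (K + 1)) (Fin (K + 1)) ℂ)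
    (hTp : Tp.PosSemidef) (hRp : Rp.PosSemidef)
    (hInv : IsUnit ((Matrix.hadamard Tp Rp).map Complex.re).det)
    (hInvK : IsUnit ((Matrix.hadamard (Tp.submatrix Fin.castSucc Fin.castSucc)
        (Rp.submatrix Fin.castSucc Fin.castSucc)).map Complex.re).det)
    (T : Matrix (Fin K) (Fin K) ℂ) (hT : T.IsHermitian)
    (hTle : (T - Tp.submatrix Fin.castSucc Fin.castSucc).PosSemidef)
    (hTpos : ((Matrix.hadamard T (Rp.submatrix Fin.castSucc Fin.castSucc)).map
        Complex.re).PosDef) :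
    ((((Matrix.hadamard Tp Rp).map Complex.re)⁻¹).submatrix Fin.castSucc Fin.castSucc -
      ((Matrix.hadamard T (Rp.submatrix Fin.castSucc Fin.castSucc)).map
        Complex.re)⁻¹).PosSemidef := by
  have hA : ((Matrix.hadamard Tp Rp).map Complex.re).PosDef :=
    posDefOfUnitDet (rePSD (schurPSD hTp hRp)) hInv
  have hle : (((Matrix.hadamard T (Rp.submatrix Fin.castSucc Fin.castSucc)).map Complex.re)
      - (((Matrix.hadamard Tp Rp).map Complex.re).submatrix Fin.castSucc Fin.castSucc)).PosSemidef := by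
    have h1 : (Matrix.hadamard (T - Tp.submatrix Fin.castSucc Fin.castSucc)
        (Rp.submatrix Fin.castSucc Fin.castSucc)).PosSemidef :=
      schurPSD hTle (hRp.submatrix _)
    have h2 := rePSD h1
    convert h2 using 1
    ext i j
    simp [Matrix.hadamard_apply, Matrix.sub_apply, sub_mul, Complex.sub_re]
  exact keyIneq hA hTpos hle
end
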